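/- arXiv:1902.01065 — 3 statements merged into one kernel-verified Lean document; each statement's English description precedes it below -/
import Mathlib

section
/- Let $u \colon \mathbb{S}^1 \to \mathbb{R}$ be a positive $C^1$ function on the circle, and let $d\sigma = (2\pi)^{-1}d\theta$ be the uniform probability measure on $\mathbb{S}^1$. Then $\int_{\mathbb{S}^1} |u'|^2\,d\sigma + \tfrac14\left(\int_{\mathbb{S}^1} u^{-2}\,d\sigma\right)^{-1} \ge \tfrac14 \int_{\mathbb{S}^1} u^2\,d\sigma$. -/
open Real MeasureTheory intervalIntegral

section Wirtinger

open Complex AddCircle ContinuousMap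

/-- Wirtinger's inequality for complex valued `T`-periodic mean-zero `C¹` functions. -/
lemma wirtinger_complex {T : ℝ} (hT : 0 < T) {f : ℝ → ℂ}
    (hf : ContDiff ℝ 1 f) (hp : Function.Periodic f T)
    (hmean : (∫ x in (0:ℝ)..T, f x) = 0) :
    (∫ x in (0:ℝ)..T, ‖f x‖^2) ≤ (T/(2*π))^2 * ∫ x in (0:ℝ)..T, ‖deriv f x‖^2 := by
  haveI : Fact (0 < T) := ⟨hT⟩
  have hfc : Continuous f := hf.continuous
  have hdc : Continuous (deriv f) := hf.continuous_deriv le_rfl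
  have hpd : Function.Periodic (deriv f) T := by
    intro x
    have : (fun y => f (y + T)) = f := funext hp
    rw [← deriv_comp_add_const, this]
  -- continuous maps on the circle
  set F : C(AddCircle T, ℂ) := ⟨hp.lift, hfc.quotient_liftOn' _⟩ with hFdef
  set G : C(AddCircle T, ℂ) := ⟨hpd.lift, hdc.quotient_liftOn' _⟩ with hGdef
  have hFx : ∀ x : ℝ, F (x : AddCircle T) = f x := fun x => rfl
  have hGx : ∀ x : ℝ, G (x : AddCircle T) = deriv f x := fun x => rfl
  -- Fourier coefficients agree with `fourierCoeffOn`
  have hOnF : ∀ n : ℤ, fourierCoeffOn hT f n = fourierCoeff (⇑F) n := by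
    intro n
    simp only [fourierCoeffOn_eq_integral, fourierCoeff_eq_intervalIntegral (⇑F) n 0,
      zero_add, sub_zero, fourier_coe_apply, hFx]
  have hOnG : ∀ n : ℤ, fourierCoeffOn hT (deriv f) n = fourierCoeff (⇑G) n := by
    intro n
    simp only [fourierCoeffOn_eq_integral, fourierCoeff_eq_intervalIntegral (⇑G) n 0,
      zero_add, sub_zero, fourier_coe_apply, hGx]
  -- coefficient relation
  have hrel : ∀ n : ℤ, n ≠ 0 →
      ‖fourierCoeff (⇑F) n‖ ≤ (T/(2*π)) * ‖fourierCoeff (⇑G) n‖ := by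
    intro n hn
    have hder : ∀ x ∈ Set.uIcc (0:ℝ) T, HasDerivAt f (deriv f x) x := fun x _ =>
      (hf.differentiable one_ne_zero x).hasDerivAt
    have hint : IntervalIntegrable (deriv f) volume 0 T := hdc.intervalIntegrable _ _
    have h := fourierCoeffOn_of_hasDerivAt hT hn hder hint
    have hfT : f T = f 0 := by simpa using hp 0
    rw [hfT, sub_self, mul_zero, zero_sub, hOnF, hOnG] at h
    rw [h]
    rw [norm_mul, norm_neg, norm_mul]
    have hnormn : ‖(1 / (-2 * ↑π * Complex.I * (n:ℂ)))‖ = 1 / (2*π*|(n:ℝ)|) := by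
      rw [norm_div, norm_one]
      simp [Complex.norm_real, abs_of_pos Real.pi_pos, norm_mul]
    rw [hnormn]
    have h1 : ‖((T:ℂ) - (0:ℂ))‖ = T := by
      simp [Complex.norm_real, abs_of_pos hT]
    have hTc : ((T:ℝ):ℂ) - ((0:ℝ):ℂ) = (T:ℂ) := by norm_num
    have hn1 : (1:ℝ) ≤ |(n:ℝ)| := by
      rw [← Int.cast_abs]
      exact_mod_cast Int.one_le_abs hn
    have hπ : (0:ℝ) < 2*π := by positivity
    calc 1 / (2*π*|(n:ℝ)|) * (‖((T:ℝ):ℂ) - ((0:ℝ):ℂ)‖ * ‖fourierCoeff (⇑G) n‖)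
        = (T / (2*π*|(n:ℝ)|)) * ‖fourierCoeff (⇑G) n‖ := by
          rw [hTc]
          rw [show ‖(T:ℂ)‖ = T by simp [Complex.norm_real, abs_of_pos hT]]
          ring
      _ ≤ (T/(2*π)) * ‖fourierCoeff (⇑G) n‖ := by
          apply mul_le_mul_of_nonneg_right _ (norm_nonneg _)
          apply div_le_div_of_nonneg_left hT.le hπ
          nlinarith [Real.pi_pos]
  -- zero mean
  have hc0 : fourierCoeff (⇑F) 0 = 0 := by
    rw [fourierCoeff_eq_intervalIntegral (⇑F) 0 0, zero_add]
    simp only [neg_zero, fourier_zero, one_smul, hFx]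
    rw [hmean, smul_zero]
  -- Parseval for F and G
  have parsF : (∑' i : ℤ, ‖fourierCoeff (⇑F) i‖^2)
      = ∫ t : AddCircle T, ‖F t‖^2 ∂haarAddCircle := by
    have h := tsum_sq_fourierCoeff (ContinuousMap.toLp 2 haarAddCircle ℂ F)
    simp_rw [fourierCoeff_toLp] at h
    rw [h]
    have hae : (↑↑((ContinuousMap.toLp (E := ℂ) 2 haarAddCircle ℂ) F) : AddCircle T → ℂ)
        =ᶠ[ae haarAddCircle] ⇑F := ContinuousMap.coeFn_toLp haarAddCircle F
    refine integral_congr_ae ?_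
    filter_upwards [hae] with t ht
    rw [ht]
  have parsG : (∑' i : ℤ, ‖fourierCoeff (⇑G) i‖^2)
      = ∫ t : AddCircle T, ‖G t‖^2 ∂haarAddCircle := by
    have h := tsum_sq_fourierCoeff (ContinuousMap.toLp 2 haarAddCircle ℂ G)
    simp_rw [fourierCoeff_toLp] at h
    rw [h]
    have hae : (↑↑((ContinuousMap.toLp (E := ℂ) 2 haarAddCircle ℂ) G) : AddCircle T → ℂ)
        =ᶠ[ae haarAddCircle] ⇑G := ContinuousMap.coeFn_toLp haarAddCircle G
    refine integral_congr_ae ?_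
    filter_upwards [hae] with t ht
    rw [ht]
  -- summability
  have sumG : Summable fun i : ℤ => ‖fourierCoeff (⇑G) i‖^2 := by
    have h := (lp.memℓp (fourierBasis.repr
      (ContinuousMap.toLp (E := ℂ) 2 haarAddCircle ℂ G))).summable (by norm_num)
    simp_rw [fourierBasis_repr, fourierCoeff_toLp] at h
    have h2 : ((2:ENNReal)).toReal = ((2:ℕ):ℝ) := by norm_num
    rw [h2] at h
    simpa [Real.rpow_natCast] using h
  have hterm : ∀ i : ℤ, ‖fourierCoeff (⇑F) i‖^2 ≤ (T/(2*π))^2 * ‖fourierCoeff (⇑G) i‖^2 := by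
    intro i
    rcases eq_or_ne i 0 with rfl | hi
    · rw [hc0, norm_zero]
      have h0 : (0:ℝ) ≤ (T/(2*π))^2 * ‖fourierCoeff (⇑G) 0‖^2 := by positivity
      simpa using h0
    · have := hrel i hi
      have h0 : (0:ℝ) ≤ ‖fourierCoeff (⇑F) i‖ := norm_nonneg _
      nlinarith [norm_nonneg (fourierCoeff (⇑G) i), Real.pi_pos,
        mul_pos (mul_pos two_pos Real.pi_pos) (mul_pos two_pos Real.pi_pos)]
  have sumF : Summable fun i : ℤ => ‖fourierCoeff (⇑F) i‖^2 :=
    Summable.of_nonneg_of_le (fun i => by positivity) hterm (sumG.mul_left _)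
  have htsum : (∑' i : ℤ, ‖fourierCoeff (⇑F) i‖^2)
      ≤ (T/(2*π))^2 * ∑' i : ℤ, ‖fourierCoeff (⇑G) i‖^2 := by
    rw [← tsum_mul_left]
    exact Summable.tsum_le_tsum hterm sumF (sumG.mul_left _)
  -- convert circle integrals to interval integrals
  have hIF : (∫ x in (0:ℝ)..T, ‖f x‖^2) = T * ∫ t : AddCircle T, ‖F t‖^2 ∂haarAddCircle := by
    have h := AddCircle.intervalIntegral_preimage T 0 (fun t => ‖F t‖^2)
    rw [zero_add] at h
    have h2 : (∫ x in (0:ℝ)..T, ‖f x‖^2) = ∫ x in (0:ℝ)..T, ‖F (x : AddCircle T)‖^2 := by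
      refine intervalIntegral.integral_congr fun x _ => by rw [hFx]
    rw [h2, h, AddCircle.volume_eq_smul_haarAddCircle, MeasureTheory.integral_smul_measure,
      ENNReal.toReal_ofReal hT.le, smul_eq_mul]
  have hIG : (∫ x in (0:ℝ)..T, ‖deriv f x‖^2)
      = T * ∫ t : AddCircle T, ‖G t‖^2 ∂haarAddCircle := by
    have h := AddCircle.intervalIntegral_preimage T 0 (fun t => ‖G t‖^2)
    rw [zero_add] at h
    have h2 : (∫ x in (0:ℝ)..T, ‖deriv f x‖^2)
        = ∫ x in (0:ℝ)..T, ‖G (x : AddCircle T)‖^2 := by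
      refine intervalIntegral.integral_congr fun x _ => by rw [hGx]
    rw [h2, h, AddCircle.volume_eq_smul_haarAddCircle, MeasureTheory.integral_smul_measure,
      ENNReal.toReal_ofReal hT.le, smul_eq_mul]
  rw [hIF, hIG, ← parsF, ← parsG]
  calc T * ∑' i : ℤ, ‖fourierCoeff (⇑F) i‖^2
      ≤ T * ((T/(2*π))^2 * ∑' i : ℤ, ‖fourierCoeff (⇑G) i‖^2) :=
        mul_le_mul_of_nonneg_left htsum hT.le
    _ = (T/(2*π))^2 * (T * ∑' i : ℤ, ‖fourierCoeff (⇑G) i‖^2) := by ring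

/-- Poincaré inequality for antiperiodic `C¹` functions on the circle. -/
lemma antiperiodic_poincare {f : ℝ → ℝ} (hf : ContDiff ℝ 1 f)
    (hap : ∀ x, f (x + 2*π) = -f x) :
    (∫ x in (0:ℝ)..(2*π), (f x)^2) ≤ 4 * ∫ x in (0:ℝ)..(2*π), (deriv f x)^2 := by
  have h2π : (0:ℝ) < 2*π := by positivity
  have h4π : (0:ℝ) < 4*π := by positivity
  set g : ℝ → ℂ := fun x => (f x : ℂ) with hg
  have hgc : ContDiff ℝ 1 g := Complex.ofRealCLM.contDiff.comp hf
  have hfd : ∀ x, HasDerivAt f (deriv f x) x := fun x => (hf.differentiable one_ne_zero x).hasDerivAt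
  have hgd : ∀ x, deriv g x = ((deriv f x : ℝ) : ℂ) := fun x => ((hfd x).ofReal_comp).deriv
  have hper : Function.Periodic g (4*π) := by
    intro x
    have : x + 4*π = (x + 2*π) + 2*π := by ring
    simp only [hg, this, hap, neg_neg]
  have hmean : (∫ x in (0:ℝ)..(4*π), g x) = 0 := by
    have hsplit : (∫ x in (0:ℝ)..(4*π), g x)
        = (∫ x in (0:ℝ)..(2*π), g x) + ∫ x in (2*π)..(4*π), g x :=
      (integral_add_adjacent_intervals (hgc.continuous.intervalIntegrable _ _)
        (hgc.continuous.intervalIntegrable _ _)).symm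
    have hshift : (∫ x in (2*π)..(4*π), g x) = ∫ x in (0:ℝ)..(2*π), g (x + 2*π) := by
      rw [intervalIntegral.integral_comp_add_right (a := (0:ℝ)) (b := 2*π) g (2*π)]
      norm_num
      ring_nf
    rw [hsplit, hshift]
    simp only [hg, hap]
    push_cast
    rw [intervalIntegral.integral_neg]
    ring
  have key := wirtinger_complex h4π hgc hper hmean
  have hc : (4*π/(2*π))^2 = 4 := by
    rw [show (4*π)/(2*π) = 2 by field_simp; ring]
    norm_num
  rw [hc] at key
  -- ‖g x‖^2 = f x ^ 2 and similarly for derivatives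
  have hng : ∀ x, ‖g x‖^2 = (f x)^2 := fun x => by
    simp [hg, Complex.norm_real, sq_abs]
  have hng' : ∀ x, ‖deriv g x‖^2 = (deriv f x)^2 := fun x => by
    rw [hgd]; simp [Complex.norm_real, sq_abs]
  rw [intervalIntegral.integral_congr (fun x _ => hng x),
      intervalIntegral.integral_congr (fun x _ => hng' x)] at key
  -- fold the period-4π integrals into two copies of the period-2π integrals
  have hfp : Function.Periodic (fun x => (f x)^2) (2*π) := fun x => by
    simp [hap x]
  have hdap : ∀ x, deriv f (x + 2*π) = - deriv f x := by
    intro x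
    have h1 : (fun y => f (y + 2*π)) = fun y => -f y := funext hap
    have := deriv_comp_add_const f (2*π) (x := x)
    rw [h1] at this
    rw [← this, deriv.fun_neg]
  have hfp' : Function.Periodic (fun x => (deriv f x)^2) (2*π) := fun x => by
    simp [hdap x]
  have hdouble : ∀ (q : ℝ → ℝ), Function.Periodic q (2*π) → Continuous q →
      (∫ x in (0:ℝ)..(4*π), q x) = 2 * ∫ x in (0:ℝ)..(2*π), q x := by
    intro q hq hqc
    have hsplit : (∫ x in (0:ℝ)..(4*π), q x)
        = (∫ x in (0:ℝ)..(2*π), q x) + ∫ x in (2*π)..(4*π), q x :=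
      (integral_add_adjacent_intervals (hqc.intervalIntegrable _ _)
        (hqc.intervalIntegrable _ _)).symm
    have h24 : (2*π) + 2*π = 4*π := by ring
    have hs := hq.intervalIntegral_add_eq (2*π) 0
    rw [h24, zero_add] at hs
    rw [hsplit, hs]
    ring
  have hcf : Continuous fun x => (f x)^2 := (hf.continuous).pow 2
  have hcf' : Continuous fun x => (deriv f x)^2 := (hf.continuous_deriv le_rfl).pow 2
  rw [hdouble _ hfp hcf, hdouble _ hfp' hcf'] at key
  linarith

end Wirtinger

/-- Exner–Harrell–Loss inequality on the circle, with the uniform probability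
measure `dσ = (2π)⁻¹ dθ`, for positive `C¹` `2π`-periodic functions. -/
theorem exner_harrell_loss (u : ℝ → ℝ) (hper : Function.Periodic u (2 * π))
    (hu : ContDiff ℝ 1 u) (hpos : ∀ θ, 0 < u θ) :
    (∫ θ in (0:ℝ)..(2 * π), (deriv u θ)^2) / (2 * π)
      + (1/4) * ((∫ θ in (0:ℝ)..(2 * π), (u θ)⁻¹^2) / (2 * π))⁻¹
    ≥ (1/4) * ((∫ θ in (0:ℝ)..(2 * π), (u θ)^2) / (2 * π)) := by
  have h2π : (0:ℝ) < 2*π := by positivity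
  have hne : ∀ θ, u θ ≠ 0 := fun θ => (hpos θ).ne'
  have huc : Continuous u := hu.continuous
  have hgc : Continuous fun t => (u t)⁻¹^2 := ((huc.inv₀ hne).pow 2)
  set I2 : ℝ := ∫ θ in (0:ℝ)..(2*π), (u θ)⁻¹^2 with hI2def
  have hI2pos : 0 < I2 := by
    apply intervalIntegral.intervalIntegral_pos_of_pos_on (hgc.intervalIntegrable _ _)
      (fun x _ => by have := hpos x; positivity) h2π
  set k : ℝ := π / I2 with hkdef
  have hkpos : 0 < k := div_pos Real.pi_pos hI2pos
  set ψ : ℝ → ℝ := fun θ => k * ∫ t in (0:ℝ)..θ, (u t)⁻¹^2 with hψdef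
  have hψd : ∀ θ, HasDerivAt ψ (k * (u θ)⁻¹^2) θ := by
    intro θ
    exact (hgc.integral_hasStrictDerivAt 0 θ).hasDerivAt.const_mul k
  have hψc1 : ContDiff ℝ 1 ψ := by
    rw [contDiff_one_iff_deriv]
    constructor
    · exact fun θ => (hψd θ).differentiableAt
    · have : deriv ψ = fun θ => k * (u θ)⁻¹^2 := funext fun θ => (hψd θ).deriv
      rw [this]
      exact continuous_const.mul hgc
  have hgp : Function.Periodic (fun t => (u t)⁻¹^2) (2*π) := fun t => by simp [hper t]
  have hψadd : ∀ θ, ψ (θ + 2*π) = ψ θ + π := by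
    intro θ
    have hsplit : (∫ t in (0:ℝ)..(θ + 2*π), (u t)⁻¹^2)
        = (∫ t in (0:ℝ)..θ, (u t)⁻¹^2) + ∫ t in θ..(θ + 2*π), (u t)⁻¹^2 :=
      (integral_add_adjacent_intervals (hgc.intervalIntegrable _ _)
        (hgc.intervalIntegrable _ _)).symm
    have hs := hgp.intervalIntegral_add_eq θ 0
    rw [zero_add] at hs
    have : (∫ t in θ..(θ + 2*π), (u t)⁻¹^2) = I2 := by rw [hs]
    simp only [hψdef]
    rw [hsplit, this, mul_add, hkdef]
    field_simp
  set v : ℝ → ℝ := fun θ => u θ * Real.sin (ψ θ) with hvdef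
  set w : ℝ → ℝ := fun θ => u θ * Real.cos (ψ θ) with hwdef
  have hud : ∀ θ, HasDerivAt u (deriv u θ) θ := fun θ => (hu.differentiable one_ne_zero θ).hasDerivAt
  have hvd : ∀ θ, HasDerivAt v
      (deriv u θ * Real.sin (ψ θ) + u θ * (Real.cos (ψ θ) * (k * (u θ)⁻¹^2))) θ := by
    intro θ
    exact (hud θ).mul (((Real.hasDerivAt_sin (ψ θ)).comp θ (hψd θ)))
  have hwd : ∀ θ, HasDerivAt w
      (deriv u θ * Real.cos (ψ θ) + u θ * (-Real.sin (ψ θ) * (k * (u θ)⁻¹^2))) θ := by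
    intro θ
    exact (hud θ).mul (((Real.hasDerivAt_cos (ψ θ)).comp θ (hψd θ)))
  have hvc1 : ContDiff ℝ 1 v := hu.mul (Real.contDiff_sin.comp hψc1)
  have hwc1 : ContDiff ℝ 1 w := hu.mul (Real.contDiff_cos.comp hψc1)
  have hvap : ∀ θ, v (θ + 2*π) = -v θ := by
    intro θ
    simp only [hvdef]
    rw [hper θ, hψadd θ, Real.sin_add_pi]
    ring
  have hwap : ∀ θ, w (θ + 2*π) = -w θ := by
    intro θ
    simp only [hwdef]
    rw [hper θ, hψadd θ, Real.cos_add_pi]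
    ring
  have hv := antiperiodic_poincare hvc1 hvap
  have hw := antiperiodic_poincare hwc1 hwap
  -- pointwise identity for the derivatives
  have hpoint : ∀ θ, (deriv v θ)^2 + (deriv w θ)^2
      = (deriv u θ)^2 + k^2 * (u θ)⁻¹^2 := by
    intro θ
    rw [(hvd θ).deriv, (hwd θ).deriv]
    have hs : Real.sin (ψ θ)^2 + Real.cos (ψ θ)^2 = 1 := Real.sin_sq_add_cos_sq (ψ θ)
    have hinv : (u θ)⁻¹ * u θ = 1 := inv_mul_cancel₀ (hne θ)
    linear_combination (deriv u θ^2 + (u θ)^2*k^2*((u θ)⁻¹)^4) * hs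
      + k^2*((u θ)⁻¹)^2*((u θ)*(u θ)⁻¹ + 1) * hinv
  -- sum of squares identity for values
  have hvw : ∀ θ, (v θ)^2 + (w θ)^2 = (u θ)^2 := by
    intro θ
    simp only [hvdef, hwdef]
    linear_combination (u θ)^2 * (Real.sin_sq_add_cos_sq (ψ θ))
  -- integrate
  have hcv' : Continuous fun θ => (deriv v θ)^2 := (hvc1.continuous_deriv le_rfl).pow 2
  have hcw' : Continuous fun θ => (deriv w θ)^2 := (hwc1.continuous_deriv le_rfl).pow 2
  have hcu' : Continuous fun θ => (deriv u θ)^2 := (hu.continuous_deriv le_rfl).pow 2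
  have hintsum : (∫ θ in (0:ℝ)..(2*π), (deriv v θ)^2) + (∫ θ in (0:ℝ)..(2*π), (deriv w θ)^2)
      = (∫ θ in (0:ℝ)..(2*π), (deriv u θ)^2) + k^2 * I2 := by
    rw [← intervalIntegral.integral_add (hcv'.intervalIntegrable _ _)
      (hcw'.intervalIntegrable _ _)]
    rw [intervalIntegral.integral_congr (fun θ _ => hpoint θ)]
    rw [intervalIntegral.integral_add (hcu'.intervalIntegrable _ _)
      ((show Continuous (fun θ => k^2 * (u θ)⁻¹^2) from continuous_const.mul hgc).intervalIntegrable _ _)]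
    rw [intervalIntegral.integral_const_mul]
  have hintvw : (∫ θ in (0:ℝ)..(2*π), (v θ)^2) + (∫ θ in (0:ℝ)..(2*π), (w θ)^2)
      = ∫ θ in (0:ℝ)..(2*π), (u θ)^2 := by
    rw [← intervalIntegral.integral_add ((show Continuous (fun θ => (v θ)^2) from hvc1.continuous.pow 2).intervalIntegrable _ _)
      ((show Continuous (fun θ => (w θ)^2) from hwc1.continuous.pow 2).intervalIntegrable _ _)]
    exact intervalIntegral.integral_congr (fun θ _ => hvw θ)
  set I1 : ℝ := ∫ θ in (0:ℝ)..(2*π), (deriv u θ)^2 with hI1def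
  set Iu : ℝ := ∫ θ in (0:ℝ)..(2*π), (u θ)^2 with hIudef
  have hkey : Iu ≤ 4 * (I1 + k^2 * I2) := by
    rw [← hintsum, ← hintvw]
    linarith
  have hk2 : k^2 * I2 = π^2 / I2 := by
    rw [hkdef]
    field_simp
  rw [hk2] at hkey
  -- final arithmetic
  rw [ge_iff_le]
  have hrw : (1/4 : ℝ) * ((I2 / (2*π))⁻¹) = (π^2 / I2) / (2*π) := by
    rw [inv_div]
    field_simp
    ring
  rw [hrw]
  have hrw2 : (1/4 : ℝ) * (Iu / (2*π)) = (Iu/4) / (2*π) := by ring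
  rw [hrw2, ← add_div]
  rw [div_le_div_iff_of_pos_right h2π]
  linarith
end

section
/- Let $a\in(0,1/2)$ and $p>2$. Define $\lambda_\star = \frac{4(1-3a^2)-a^2p^2}{p^2-4}$ and $\lambda_\bullet = \frac{8\left(\sqrt{p^4 - a^2(p-2)^2(p+2)(3p-2)}+2\right) - 4p(p+4)}{(p-2)^3(p+2)} - a^2$. Then $\lambda_\bullet - \lambda_\star = \frac{8}{(p-2)^3(p+2)}\left(\sqrt{p^4 - a^2(p-2)^2(3p^2+4p-4)} + 2a^2(p-2)^2 - p^2\right)$, and this quantity is strictly positive. -/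
theorem lambda_bullet_gt_lambda_star (a p : ℝ) (ha : a ∈ Set.Ioo (0:ℝ) (1/2))
    (hp : 2 < p) :
    let lamStar := (4 * (1 - 3 * a^2) - a^2 * p^2) / (p^2 - 4)
    let lamBullet := (8 * (Real.sqrt (p^4 - a^2 * (p-2)^2 * (p+2) * (3*p-2)) + 2)
        - 4 * p * (p + 4)) / ((p-2)^3 * (p+2)) - a^2
    lamBullet - lamStar = 8 / ((p-2)^3 * (p+2)) *
        (Real.sqrt (p^4 - a^2 * (p-2)^2 * (3*p^2 + 4*p - 4))
          + 2 * a^2 * (p-2)^2 - p^2)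
    ∧ 0 < lamBullet - lamStar := by
  obtain ⟨ha0, ha1⟩ := ha
  intro lamStar lamBullet
  have hp2 : (0:ℝ) < p - 2 := by linarith
  have hp2' : (0:ℝ) < p + 2 := by linarith
  have harg : p^4 - a^2 * (p-2)^2 * (3*p^2 + 4*p - 4)
      = p^4 - a^2 * (p-2)^2 * (p+2) * (3*p-2) := by ring
  set s := Real.sqrt (p^4 - a^2 * (p-2)^2 * (p+2) * (3*p-2)) with hs
  have h14 : 0 < 1 - 4*a^2 := by nlinarith
  have hx : 0 ≤ p^2 - 2*a^2*(p-2)^2 := by nlinarith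
  have hlt : p^2 - 2*a^2*(p-2)^2 < s := by
    show p^2 - 2*a^2*(p-2)^2 < Real.sqrt (p^4 - a^2 * (p-2)^2 * (p+2) * (3*p-2))
    rw [Real.lt_sqrt hx]
    nlinarith [mul_pos (mul_pos (mul_pos ha0 ha0) (pow_pos hp2 4)) h14]
  have hd1 : p^2 - 4 ≠ 0 := by nlinarith
  have hd2 : (p-2)^3 * (p+2) ≠ 0 := by positivity
  have hid : lamBullet - lamStar = 8 / ((p-2)^3 * (p+2)) *
      (s + 2 * a^2 * (p-2)^2 - p^2) := by
    simp only [lamBullet, lamStar, ← hs]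
    field_simp
    ring
  constructor
  · rw [hid, harg, ← hs]
  · rw [hid]
    have : 0 < 8 / ((p-2)^3 * (p+2)) := by positivity
    have h2 : 0 < s + 2 * a^2 * (p-2)^2 - p^2 := by linarith
    exact mul_pos this h2
end

section
/- For any real numbers $a\in(0,1/2)$ and $p>2$, one has $\lambda_\bullet < \lambda_{\mathrm{FS}}$, where $\lambda_\bullet = \frac{8\left(\sqrt{p^4 - a^2(p-2)^2(p+2)(3p-2)}+2\right) - 4p(p+4)}{(p-2)^3(p+2)} - a^2$ and $\lambda_{\mathrm{FS}} = \frac{4(1+a^2) - a^2 p^2}{p^2-4}$. -/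
theorem lambda_bullet_lt_lambda_FS (a p : ℝ) (ha : a ∈ Set.Ioo (0:ℝ) (1/2))
    (hp : 2 < p) :
    (8 * (Real.sqrt (p^4 - a^2 * (p-2)^2 * (p+2) * (3*p-2)) + 2)
        - 4 * p * (p + 4)) / ((p-2)^3 * (p+2)) - a^2
      < (4 * (1 + a^2) - a^2 * p^2) / (p^2 - 4) := by
  obtain ⟨ha0, ha1⟩ := ha
  have h2 : 0 < p - 2 := by linarith
  have hden : 0 < (p-2)^3 * (p+2) := by positivity
  have hs : Real.sqrt (p^4 - a^2 * (p-2)^2 * (p+2) * (3*p-2)) < p^2 := by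
    rw [Real.sqrt_lt' (by positivity)]
    nlinarith [mul_pos (mul_pos (mul_pos (pow_pos ha0 2) (pow_pos h2 2)) (show (0:ℝ) < p+2 by linarith)) (show (0:ℝ) < 3*p-2 by linarith)]
  have key : (8 * (Real.sqrt (p^4 - a^2 * (p-2)^2 * (p+2) * (3*p-2)) + 2)
        - 4 * p * (p + 4)) / ((p-2)^3 * (p+2))
      < (8 * (p^2 + 2) - 4 * p * (p + 4)) / ((p-2)^3 * (p+2)) := by
    gcongr
  have heq : (8 * (p^2 + 2) - 4 * p * (p + 4)) / ((p-2)^3 * (p+2)) - a^2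
      = (4 * (1 + a^2) - a^2 * p^2) / (p^2 - 4) := by
    have h4 : p^2 - 4 ≠ 0 := by nlinarith
    field_simp
    ring
  linarith [key]
end
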